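/- arXiv:1608.02770 — 5 statements merged into one kernel-verified Lean document; each statement's English description precedes it below -/
import Mathlib

section
/- Let c₀, c₁, c₂ ≥ 0, c₃ > 0 and p > 0. Then there exist constants c, c' > 0, depending only on c₀, c₁, c₂, c₃ and p (and not on the solution or on the time interval), with the following property: for every t₁ > 0 and every differentiable function f : [0, t₁] → ℝ with f(t) > 0 for all t ∈ [0, t₁] and satisfying the differential inequality f'(t) ≤ c₀ + c₁ f(t) + c₂ f(t)² − c₃ f(t)^{2+p} for all t ∈ [0, t₁], one has f(t) ≤ c + c' · t^{−1/(p+1)} for all t ∈ (0, t₁]. -/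
set_option maxHeartbeats 1000000


/-- Let `c₀, c₁, c₂ ≥ 0`, `c₃ > 0` and `p > 0`. Then there exist constants
`c, c' > 0`, depending only on `c₀, c₁, c₂, c₃, p` (not on the solution or the time
interval), such that every positive differentiable `f` on `[0, t₁]` satisfying
`f' ≤ c₀ + c₁ f + c₂ f² − c₃ f^(2+p)` obeys `f t ≤ c + c' * t^(−1/(p+1))` on `(0, t₁]`. -/
theorem flow_ode_decay_bound (c₀ c₁ c₂ c₃ p : ℝ)
    (h₀ : 0 ≤ c₀) (h₁ : 0 ≤ c₁) (h₂ : 0 ≤ c₂) (h₃ : 0 < c₃) (hp : 0 < p) :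
    ∃ c c' : ℝ, 0 < c ∧ 0 < c' ∧
      ∀ t₁ : ℝ, 0 < t₁ → ∀ f f' : ℝ → ℝ,
        (∀ t ∈ Set.Icc (0 : ℝ) t₁, HasDerivAt f (f' t) t) →
        (∀ t ∈ Set.Icc (0 : ℝ) t₁, 0 < f t) →
        (∀ t ∈ Set.Icc (0 : ℝ) t₁,
          f' t ≤ c₀ + c₁ * f t + c₂ * (f t) ^ 2 - c₃ * (f t) ^ (2 + p)) →
        ∀ t ∈ Set.Ioc (0 : ℝ) t₁, f t ≤ c + c' * t ^ (-(1 / (p + 1))) := by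
  set B := c₀ + c₁ + c₂ + 1 with hBdef
  have hBpos : 0 < B := by positivity
  set M := max 1 ((2 * B / c₃) ^ (1 / p)) with hMdef
  have hM1 : (1 : ℝ) ≤ M := le_max_left _ _
  have hMpos : 0 < M := lt_of_lt_of_le one_pos hM1
  have hMge : (2 * B / c₃) ^ (1 / p) ≤ M := le_max_right _ _
  set K := (p + 1) * (c₃ / 2) with hKdef
  have hKpos : 0 < K := by positivity
  clear_value M K
  refine ⟨M, K ^ (-(1 / (p + 1))), hMpos, Real.rpow_pos_of_pos hKpos _, ?_⟩
  intro t₁ ht₁ f f' hderiv hfpos hode t ht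
  have hcont : ContinuousOn f (Set.Icc 0 t₁) := fun s hs =>
    (hderiv s hs).continuousAt.continuousWithinAt
  -- key differential inequality where f is large
  have key : ∀ s ∈ Set.Icc (0 : ℝ) t₁, M ≤ f s →
      f' s ≤ -(c₃ / 2) * f s ^ (2 + p) := by
    intro s hs hMle
    have hf1 : (1 : ℝ) ≤ f s := le_trans hM1 hMle
    have hf0 : 0 < f s := hfpos s hs
    have h2p : f s ^ (2 + p) = f s ^ 2 * f s ^ p := by
      rw [← Real.rpow_natCast (f s) 2, ← Real.rpow_add hf0]
      norm_num
    have hfp : 2 * B / c₃ ≤ f s ^ p := by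
      have h1 : ((2 * B / c₃) ^ (1 / p)) ^ p ≤ f s ^ p :=
        Real.rpow_le_rpow (Real.rpow_nonneg (by positivity) _)
          (le_trans hMge hMle) hp.le
      rwa [← Real.rpow_mul (by positivity), one_div, inv_mul_cancel₀ hp.ne',
        Real.rpow_one] at h1
    have hB2 : B ≤ c₃ / 2 * f s ^ p := by
      rw [div_le_iff₀ h₃] at hfp
      nlinarith
    have hquad : c₀ + c₁ * f s + c₂ * f s ^ 2 ≤ c₃ / 2 * f s ^ (2 + p) := by
      have e1 : c₀ ≤ c₀ * f s ^ 2 := le_mul_of_one_le_right h₀ (by nlinarith)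
      have e2 : c₁ * f s ≤ c₁ * f s ^ 2 :=
        mul_le_mul_of_nonneg_left (by nlinarith) h₁
      have hbb : B * f s ^ 2 ≤ (c₃ / 2 * f s ^ p) * f s ^ 2 :=
        mul_le_mul_of_nonneg_right hB2 (sq_nonneg _)
      rw [h2p]
      nlinarith [sq_nonneg (f s), e1, e2, hbb]
    have hO := hode s hs
    have hpow : 0 < f s ^ (2 + p) := Real.rpow_pos_of_pos hf0 _
    linarith
  obtain ⟨ht0, ht1⟩ := ht
  have htI : t ∈ Set.Icc (0 : ℝ) t₁ := ⟨ht0.le, ht1⟩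
  have hIccsub : Set.Icc (0 : ℝ) t ⊆ Set.Icc 0 t₁ := Set.Icc_subset_Icc le_rfl ht1
  have hpowt : 0 < t ^ (-(1 / (p + 1))) := Real.rpow_pos_of_pos ht0 _
  have hc'pos : 0 < K ^ (-(1 / (p + 1))) := Real.rpow_pos_of_pos hKpos _
  by_cases hcase : f t ≤ M
  · nlinarith [mul_pos hc'pos hpowt]

  push_neg at hcase
  -- f stays ≥ M backwards in time
  have stayM : ∀ s ∈ Set.Icc (0 : ℝ) t, M ≤ f s := by
    by_contra hcon
    push_neg at hcon
    obtain ⟨s₀, hs₀, hs₀f⟩ := hcon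
    set A := {s | s ∈ Set.Icc (0 : ℝ) t ∧ f s ≤ M} with hA
    have hAsub : A ⊆ Set.Icc 0 t := fun x hx => hx.1
    have hAne : A.Nonempty := ⟨s₀, hs₀, hs₀f.le⟩
    have hAclosed : IsClosed A := by
      have : A = Set.Icc (0 : ℝ) t ∩ f ⁻¹' Set.Iic M := by
        ext x; simp [hA, Set.mem_Icc, and_comm]
      rw [this]
      exact ContinuousOn.preimage_isClosed_of_isClosed (hcont.mono hIccsub)
        isClosed_Icc isClosed_Iic
    have hAcomp : IsCompact A := isCompact_Icc.of_isClosed_subset hAclosed hAsub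
    set σ := sSup A with hσdef
    have hσA : σ ∈ A := hAcomp.sSup_mem hAne
    have hσ0 : 0 ≤ σ := hσA.1.1
    have hσt : σ ≤ t := hσA.1.2
    have hσlt : σ < t := lt_of_le_of_ne hσt (by
      intro h; rw [h] at hσA; exact absurd hσA.2 (not_le.mpr hcase))
    have hup : ∀ u ∈ Set.Ioc σ t, M < f u := by
      intro u hu
      by_contra h
      push_neg at h
      have huA : u ∈ A := ⟨⟨le_trans hσ0 hu.1.le, hu.2⟩, h⟩
      exact absurd (le_csSup hAcomp.bddAbove huA) (not_le.mpr hu.1)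
    have hsub2 : Set.Icc σ t ⊆ Set.Icc 0 t₁ :=
      Set.Icc_subset_Icc hσ0 ht1
    have hanti : AntitoneOn f (Set.Icc σ t) := by
      apply antitoneOn_of_deriv_nonpos (convex_Icc _ _) (hcont.mono hsub2)
      · intro x hx
        rw [interior_Icc] at hx
        exact (hderiv x (hsub2 ⟨hx.1.le, hx.2.le⟩)).differentiableAt.differentiableWithinAt
      · intro x hx
        rw [interior_Icc] at hx
        have hxI : x ∈ Set.Icc (0 : ℝ) t₁ := hsub2 ⟨hx.1.le, hx.2.le⟩
        rw [(hderiv x hxI).deriv]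
        have hk := key x hxI (hup x ⟨hx.1, hx.2.le⟩).le
        have hpow : 0 < f x ^ (2 + p) := Real.rpow_pos_of_pos (hfpos x hxI) _
        nlinarith
    have : f t ≤ f σ := hanti ⟨le_rfl, hσt⟩ ⟨hσt, le_rfl⟩ hσt
    have : f t ≤ M := le_trans this hσA.2
    exact absurd this (not_le.mpr hcase)
  -- comparison via g(s) = f(s)^(-(p+1)) - K s
  set q : ℝ := -(p + 1) with hqdef
  clear_value q
  have hg : MonotoneOn (fun s => f s ^ q - K * s) (Set.Icc 0 t) := by
    apply monotoneOn_of_deriv_nonneg (convex_Icc _ _)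
    · apply ContinuousOn.sub
      · exact (hcont.mono hIccsub).rpow_const fun x hx =>
          Or.inl (hfpos x (hIccsub hx)).ne'
      · exact (continuous_const.mul continuous_id).continuousOn
    · intro x hx
      rw [interior_Icc] at hx
      have hxI : x ∈ Set.Icc (0 : ℝ) t₁ := hIccsub ⟨hx.1.le, hx.2.le⟩
      exact (((hderiv x hxI).rpow_const (Or.inl (hfpos x hxI).ne')).sub
        ((hasDerivAt_id x).const_mul K)).differentiableAt.differentiableWithinAt
    · intro x hx
      rw [interior_Icc] at hx
      have hxI : x ∈ Set.Icc (0 : ℝ) t₁ := hIccsub ⟨hx.1.le, hx.2.le⟩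
      have hf0 : 0 < f x := hfpos x hxI
      have hd : HasDerivAt (fun s => f s ^ q - K * s)
          (f' x * q * f x ^ (q - 1) - K * 1) x :=
        ((hderiv x hxI).rpow_const (Or.inl hf0.ne')).sub
          ((hasDerivAt_id x).const_mul K)
      rw [hd.deriv]
      have hk := key x hxI (stayM x ⟨hx.1.le, hx.2.le⟩)
      have hPpos : 0 < f x ^ (q - 1) := Real.rpow_pos_of_pos hf0 _
      have hmul : f x ^ (2 + p) * f x ^ (q - 1) = 1 := by
        rw [← Real.rpow_add hf0]
        have : 2 + p + (q - 1) = 0 := by rw [hqdef]; ring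
        rw [this, Real.rpow_zero]
      have h1 : f' x * f x ^ (q - 1) ≤ -(c₃ / 2) := by
        have := mul_le_mul_of_nonneg_right hk hPpos.le
        nlinarith
      have : f' x * q * f x ^ (q - 1) = -(p + 1) * (f' x * f x ^ (q - 1)) := by
        rw [hqdef]; ring
      rw [this]
      have h2 : (p + 1) * (f' x * f x ^ (q - 1)) ≤ (p + 1) * (-(c₃ / 2)) :=
        mul_le_mul_of_nonneg_left h1 (by linarith)
      linarith
  have hmono := hg ⟨le_rfl, ht0.le⟩ ⟨ht0.le, le_rfl⟩ ht0.le
  have hf00 : 0 < f 0 := hfpos 0 ⟨le_rfl, ht₁.le⟩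
  have hf0q : 0 < f 0 ^ q := Real.rpow_pos_of_pos hf00 _
  have hlt : K * t < f t ^ q := by
    simp only [mul_zero, sub_zero] at hmono
    linarith
  have hKt : 0 < K * t := mul_pos hKpos ht0
  have hneg : -(1 / (p + 1)) < (0 : ℝ) := by
    have h01 : 0 < 1 / (p + 1) := by positivity
    linarith
  have hfin : (f t ^ q) ^ (-(1 / (p + 1))) < (K * t) ^ (-(1 / (p + 1))) :=
    Real.rpow_lt_rpow_of_neg hKt hlt hneg
  have hql : q * (-(1 / (p + 1))) = 1 := by
    rw [hqdef]; field_simp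
  rw [← Real.rpow_mul (hfpos t htI).le, hql, Real.rpow_one,
    Real.mul_rpow hKpos.le ht0.le] at hfin
  linarith
end

section
/- Let n ≥ 2, let κ = (κ_1, …, κ_n) ∈ ℝ^n have all entries positive, let 1 ≤ l < n be an integer and let δ > 0. Then for every vector v = (v_1, …, v_n) ∈ ℝ^n one has: −Σ_{p≠q} σ_{n-2}(κ|pq) v_p v_q + (1 − 1/(n−l) + 1/((n−l)δ)) · (Σ_p σ_{n-1}(κ|p) v_p)² / σ_n(κ) ≥ (1 + (1−δ)/(n−l)) · σ_n(κ) · (Σ_p σ_{l-1}(κ|p) v_p)² / σ_l(κ)² − (σ_n(κ)/σ_l(κ)) · Σ_{p≠q} σ_{l-2}(κ|pq) v_p v_q. -/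
open Finset

/-- The `k`-th elementary symmetric polynomial of the values of `κ` on the index set `s`,
with the convention that it vanishes for negative `k` (and `σ₀ = 1`). -/
noncomputable def esymmSet {n : ℕ} (s : Finset (Fin n)) (k : ℤ) (κ : Fin n → ℝ) : ℝ :=
  if k < 0 then 0 else ∑ t ∈ s.powersetCard k.toNat, ∏ j ∈ t, κ j

theorem sum_insert_powersetCard {ι : Type*} [DecidableEq ι] (s : Finset ι) (k : ℕ)
    (f : Finset ι → ι → ℝ) :
    ∑ p ∈ s, ∑ J ∈ (s.erase p).powersetCard k, f J p
      = ∑ I ∈ s.powersetCard (k+1), ∑ p ∈ I, f (I.erase p) p := by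
  rw [Finset.sum_sigma', Finset.sum_sigma']
  apply Finset.sum_nbij' (i := fun a => (⟨insert a.1 a.2, a.1⟩ : Σ _ : Finset ι, ι))
    (j := fun a => (⟨a.2, a.1.erase a.2⟩ : Σ _ : ι, Finset ι))
  · rintro ⟨p, J⟩ h
    simp only [mem_sigma, mem_powersetCard] at h ⊢
    obtain ⟨hp, hJ, hcard⟩ := h
    have hpJ : p ∉ J := fun hmem => (mem_erase.1 (hJ hmem)).1 rfl
    refine ⟨⟨?_, ?_⟩, mem_insert_self _ _⟩
    · exact insert_subset hp (hJ.trans (erase_subset _ _))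
    · rw [card_insert_of_notMem hpJ, hcard]
  · rintro ⟨I, p⟩ h
    simp only [mem_sigma, mem_powersetCard] at h ⊢
    obtain ⟨⟨hI, hcard⟩, hp⟩ := h
    refine ⟨hI hp, ?_, ?_⟩
    · intro j hj
      exact mem_erase.2 ⟨(mem_erase.1 hj).1, hI ((mem_erase.1 hj).2)⟩
    · rw [card_erase_of_mem hp, hcard]; rfl
  · rintro ⟨p, J⟩ h
    simp only [mem_sigma, mem_powersetCard] at h
    obtain ⟨hp, hJ, hcard⟩ := h
    have hpJ : p ∉ J := fun hmem => (mem_erase.1 (hJ hmem)).1 rfl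
    simp [erase_insert hpJ]
  · rintro ⟨I, p⟩ h
    simp only [mem_sigma, mem_powersetCard] at h
    simp [insert_erase h.2]
  · rintro ⟨p, J⟩ h
    simp only [mem_sigma, mem_powersetCard] at h
    obtain ⟨hp, hJ, hcard⟩ := h
    have hpJ : p ∉ J := fun hmem => (mem_erase.1 (hJ hmem)).1 rfl
    simp [erase_insert hpJ]

theorem weighted_cs {ι : Type*} (s : Finset ι) (w f : ι → ℝ) (hw : ∀ i ∈ s, 0 ≤ w i) :
    (∑ i ∈ s, w i * f i)^2 ≤ (∑ i ∈ s, w i) * ∑ i ∈ s, w i * (f i)^2 := by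
  apply Finset.sum_sq_le_sum_mul_sum_of_sq_eq_mul s hw
    (fun i hi => mul_nonneg (hw i hi) (sq_nonneg _))
  intro i hi
  ring

set_option maxHeartbeats 1000000 in
/-- Guan–Ren–Wang type concavity inequality for quotients `σ_n/σ_l`. -/
theorem esymm_quotient_concavity_ineq (n : ℕ) (hn : 2 ≤ n)
    (κ : Fin n → ℝ) (hκ : ∀ i, 0 < κ i)
    (l : ℕ) (hl1 : 1 ≤ l) (hl2 : l < n) (δ : ℝ) (hδ : 0 < δ) (v : Fin n → ℝ) :
    -(∑ p : Fin n, ∑ q ∈ univ.erase p,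
        esymmSet ((univ.erase p).erase q) ((n : ℤ) - 2) κ * v p * v q)
      + (1 - 1 / ((n : ℝ) - l) + 1 / (((n : ℝ) - l) * δ)) *
          (∑ p : Fin n, esymmSet (univ.erase p) ((n : ℤ) - 1) κ * v p) ^ 2 /
            esymmSet univ (n : ℤ) κ
    ≥ (1 + (1 - δ) / ((n : ℝ) - l)) * esymmSet univ (n : ℤ) κ *
          (∑ p : Fin n, esymmSet (univ.erase p) ((l : ℤ) - 1) κ * v p) ^ 2 /
            (esymmSet univ (l : ℤ) κ) ^ 2
      - esymmSet univ (n : ℤ) κ / esymmSet univ (l : ℤ) κ *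
          ∑ p : Fin n, ∑ q ∈ univ.erase p,
            esymmSet ((univ.erase p).erase q) ((l : ℤ) - 2) κ * v p * v q := by
  have hκ0 : ∀ i, κ i ≠ 0 := fun i => (hκ i).ne'
  set m : ℝ := (n : ℝ) - l with hmdef
  have hm : 0 < m := by
    rw [hmdef]; have : (l:ℝ) < n := by exact_mod_cast hl2
    linarith
  set x : Fin n → ℝ := fun p => v p / κ p with hxdef
  have hv : ∀ p, v p = κ p * x p := by
    intro p
    show v p = κ p * (v p / κ p)
    rw [mul_comm (κ p) (v p / κ p), div_mul_cancel₀ _ (hκ0 p)]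
  set P : ℝ := ∏ j, κ j with hPdef
  have hPpos : 0 < P := Finset.prod_pos fun i _ => hκ i
  set A : ℝ := ∑ p, x p with hAdef
  set B : ℝ := ∑ p, (x p)^2 with hBdef
  set 𝒮 : Finset (Finset (Fin n)) := (univ : Finset (Fin n)).powersetCard l with h𝒮def
  set σl : ℝ := ∑ I ∈ 𝒮, ∏ i ∈ I, κ i with hσldef
  set S : ℝ := ∑ I ∈ 𝒮, (∏ i ∈ I, κ i) * ∑ i ∈ I, x i with hSdef
  set W : ℝ := ∑ I ∈ 𝒮, (∏ i ∈ I, κ i) * (∑ i ∈ I, x i)^2 with hWdef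
  set Z : ℝ := ∑ I ∈ 𝒮, (∏ i ∈ I, κ i) * ∑ i ∈ I, (x i)^2 with hZdef
  set R : ℝ := ∑ I ∈ 𝒮, (∏ i ∈ I, κ i) * (A - ∑ i ∈ I, x i)^2 with hRdef
  have hcard : (univ : Finset (Fin n)).card = n := by simp
  have hkpos : ∀ I ∈ 𝒮, (0:ℝ) ≤ ∏ i ∈ I, κ i :=
    fun I _ => le_of_lt (Finset.prod_pos fun i _ => hκ i)
  -- n-side esymm evaluations
  have hPn : esymmSet univ (n : ℤ) κ = P := by
    rw [esymmSet, if_neg (by omega)]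
    have h2 : ((n:ℤ)).toNat = (univ : Finset (Fin n)).card := by rw [hcard]; omega
    rw [h2, Finset.powersetCard_self, Finset.sum_singleton]
  have en1 : ∀ p : Fin n, esymmSet (univ.erase p) ((n:ℤ)-1) κ = ∏ j ∈ univ.erase p, κ j := by
    intro p
    rw [esymmSet, if_neg (by omega)]
    have h2 : ((n:ℤ)-1).toNat = (univ.erase p).card := by
      rw [card_erase_of_mem (mem_univ p), hcard]; omega
    rw [h2, Finset.powersetCard_self, Finset.sum_singleton]
  have en2 : ∀ p : Fin n, ∀ q ∈ univ.erase p,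
      esymmSet ((univ.erase p).erase q) ((n:ℤ)-2) κ = ∏ j ∈ (univ.erase p).erase q, κ j := by
    intro p q hq
    rw [esymmSet, if_neg (by omega)]
    have h2 : ((n:ℤ)-2).toNat = ((univ.erase p).erase q).card := by
      rw [card_erase_of_mem hq, card_erase_of_mem (mem_univ p), hcard]; omega
    rw [h2, Finset.powersetCard_self, Finset.sum_singleton]
  have hSn : ∑ p : Fin n, esymmSet (univ.erase p) ((n : ℤ) - 1) κ * v p = P * A := by
    rw [hAdef, Finset.mul_sum]
    refine Finset.sum_congr rfl fun p _ => ?_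
    rw [en1 p, hv p, hPdef, ← Finset.mul_prod_erase univ κ (mem_univ p)]
    ring
  have hTn : (∑ p : Fin n, ∑ q ∈ univ.erase p,
      esymmSet ((univ.erase p).erase q) ((n : ℤ) - 2) κ * v p * v q) = P * (A^2 - B) := by
    have step : ∀ p : Fin n, (∑ q ∈ univ.erase p,
        esymmSet ((univ.erase p).erase q) ((n : ℤ) - 2) κ * v p * v q)
          = P * (x p * (A - x p)) := by
      intro p
      have inner : ∀ q ∈ univ.erase p,
          esymmSet ((univ.erase p).erase q) ((n : ℤ) - 2) κ * v p * v q = P * x p * x q := by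
        intro q hq
        have hP2 : P = κ p * (κ q * ∏ j ∈ (univ.erase p).erase q, κ j) := by
          rw [hPdef, ← Finset.mul_prod_erase univ κ (mem_univ p),
            ← Finset.mul_prod_erase _ κ hq]
        rw [en2 p q hq, hv p, hv q, hP2]
        ring
      rw [Finset.sum_congr rfl inner, ← Finset.mul_sum,
        Finset.sum_erase_eq_sub (mem_univ p), ← hAdef]
      ring
    rw [Finset.sum_congr rfl fun p _ => step p, ← Finset.mul_sum]
    congr 1
    have expand : ∀ p : Fin n, x p * (A - x p) = x p * A - (x p)^2 := fun p => by ring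
    rw [Finset.sum_congr rfl fun p _ => expand p, Finset.sum_sub_distrib, ← Finset.sum_mul,
      ← hAdef, ← hBdef]
    ring
  have hσl : esymmSet univ (l : ℤ) κ = σl := by
    rw [esymmSet, if_neg (by omega)]
    have h2 : ((l:ℤ)).toNat = l := by omega
    rw [h2, ← h𝒮def, ← hσldef]
  have hSl : ∑ p : Fin n, esymmSet (univ.erase p) ((l : ℤ) - 1) κ * v p = S := by
    have el1 : ∀ p : Fin n, esymmSet (univ.erase p) ((l:ℤ)-1) κ
        = ∑ J ∈ (univ.erase p).powersetCard (l-1), ∏ j ∈ J, κ j := by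
      intro p
      rw [esymmSet, if_neg (by omega)]
      have h2 : ((l:ℤ)-1).toNat = l - 1 := by omega
      rw [h2]
    calc ∑ p : Fin n, esymmSet (univ.erase p) ((l : ℤ) - 1) κ * v p
        = ∑ p : Fin n, ∑ J ∈ (univ.erase p).powersetCard (l-1), (∏ j ∈ J, κ j) * v p := by
          refine Finset.sum_congr rfl fun p _ => ?_
          rw [el1 p, Finset.sum_mul]
      _ = ∑ I ∈ univ.powersetCard (l-1+1), ∑ p ∈ I, (∏ j ∈ I.erase p, κ j) * v p :=
          sum_insert_powersetCard univ (l-1) (fun J p => (∏ j ∈ J, κ j) * v p)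
      _ = S := by
          have hll : l - 1 + 1 = l := by omega
          rw [hll, ← h𝒮def, hSdef]
          refine Finset.sum_congr rfl fun I hI => ?_
          rw [Finset.mul_sum]
          refine Finset.sum_congr rfl fun p hp => ?_
          rw [hv p, ← Finset.mul_prod_erase I κ hp]
          ring
  have inner_sq : ∀ I : Finset (Fin n),
      ∑ p ∈ I, x p * ((∑ i ∈ I, x i) - x p) = (∑ i ∈ I, x i)^2 - ∑ i ∈ I, (x i)^2 := by
    intro I
    have expand : ∀ p ∈ I, x p * ((∑ i ∈ I, x i) - x p) = x p * (∑ i ∈ I, x i) - (x p)^2 :=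
      fun p _ => by ring
    rw [Finset.sum_congr rfl expand, Finset.sum_sub_distrib, ← Finset.sum_mul]
    ring
  have hTl : (∑ p : Fin n, ∑ q ∈ univ.erase p,
      esymmSet ((univ.erase p).erase q) ((l : ℤ) - 2) κ * v p * v q) = W - Z := by
    rcases eq_or_lt_of_le hl1 with hl | hl
    · -- l = 1
      have hneg : ((l:ℤ) - 2) < 0 := by omega
      have lhs0 : (∑ p : Fin n, ∑ q ∈ univ.erase p,
          esymmSet ((univ.erase p).erase q) ((l : ℤ) - 2) κ * v p * v q) = 0 := by
        refine Finset.sum_eq_zero fun p _ => Finset.sum_eq_zero fun q _ => ?_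
        rw [esymmSet, if_pos hneg, zero_mul, zero_mul]
      have hWZ : W = Z := by
        rw [hWdef, hZdef]
        refine Finset.sum_congr rfl fun I hI => ?_
        rw [h𝒮def, mem_powersetCard] at hI
        obtain ⟨i, rfl⟩ := Finset.card_eq_one.1 (by rw [hI.2, ← hl])
        simp
      rw [lhs0, hWZ, sub_self]
    · -- 2 ≤ l
      have hl2' : 2 ≤ l := hl
      have el2 : ∀ p : Fin n, ∀ q ∈ univ.erase p,
          esymmSet ((univ.erase p).erase q) ((l:ℤ)-2) κ
            = ∑ J ∈ ((univ.erase p).erase q).powersetCard (l-2), ∏ j ∈ J, κ j := by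
        intro p q _
        rw [esymmSet, if_neg (by omega)]
        have h2 : ((l:ℤ)-2).toNat = l - 2 := by omega
        rw [h2]
      calc (∑ p : Fin n, ∑ q ∈ univ.erase p,
          esymmSet ((univ.erase p).erase q) ((l : ℤ) - 2) κ * v p * v q)
          = ∑ p : Fin n, ∑ q ∈ univ.erase p,
              ∑ J ∈ ((univ.erase p).erase q).powersetCard (l-2), (∏ j ∈ J, κ j) * v p * v q := by
            refine Finset.sum_congr rfl fun p _ => Finset.sum_congr rfl fun q hq => ?_
            rw [el2 p q hq, Finset.sum_mul, Finset.sum_mul]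
        _ = ∑ p : Fin n, ∑ I' ∈ (univ.erase p).powersetCard (l-2+1),
              ∑ q ∈ I', (∏ j ∈ I'.erase q, κ j) * v p * v q := by
            refine Finset.sum_congr rfl fun p _ => ?_
            exact sum_insert_powersetCard (univ.erase p) (l-2)
              (fun J q => (∏ j ∈ J, κ j) * v p * v q)
        _ = ∑ I ∈ univ.powersetCard (l-2+1+1), ∑ p ∈ I,
              ∑ q ∈ I.erase p, (∏ j ∈ (I.erase p).erase q, κ j) * v p * v q :=
            sum_insert_powersetCard univ (l-2+1)
              (fun I' p => ∑ q ∈ I', (∏ j ∈ I'.erase q, κ j) * v p * v q)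
        _ = W - Z := by
            have hll : l - 2 + 1 + 1 = l := by omega
            rw [hll, ← h𝒮def, hWdef, hZdef, ← Finset.sum_sub_distrib]
            refine Finset.sum_congr rfl fun I hI => ?_
            have step2 : ∀ p ∈ I, (∑ q ∈ I.erase p, (∏ j ∈ (I.erase p).erase q, κ j) * v p * v q)
                = (∏ i ∈ I, κ i) * (x p * ((∑ i ∈ I, x i) - x p)) := by
              intro p hp
              have inner : ∀ q ∈ I.erase p,
                  (∏ j ∈ (I.erase p).erase q, κ j) * v p * v q
                    = (∏ i ∈ I, κ i) * x p * x q := by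
                intro q hq
                have hk2 : (∏ i ∈ I, κ i) = κ p * (κ q * ∏ j ∈ (I.erase p).erase q, κ j) := by
                  rw [← Finset.mul_prod_erase I κ hp, ← Finset.mul_prod_erase _ κ hq]
                rw [hv p, hv q, hk2]
                ring
              rw [Finset.sum_congr rfl inner, ← Finset.mul_sum,
                Finset.sum_erase_eq_sub hp]
              ring
            rw [Finset.sum_congr rfl step2, ← Finset.mul_sum, inner_sq I]
            ring
  have h𝒮ne : 𝒮.Nonempty := by
    rw [h𝒮def]
    exact Finset.powersetCard_nonempty.2 (by rw [hcard]; omega)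
  have hσlpos : 0 < σl := by
    rw [hσldef]
    exact Finset.sum_pos (fun I hI => Finset.prod_pos fun i _ => hκ i) h𝒮ne
  have hQ1 : S^2 ≤ σl * W := by
    rw [hSdef, hσldef, hWdef]
    exact weighted_cs 𝒮 (fun I => ∏ i ∈ I, κ i) (fun I => ∑ i ∈ I, x i) hkpos
  have hQ3 : (σl * A - S)^2 ≤ σl * R := by
    have h := weighted_cs 𝒮 (fun I => ∏ i ∈ I, κ i) (fun I => A - ∑ i ∈ I, x i) hkpos
    have hL : ∑ I ∈ 𝒮, (∏ i ∈ I, κ i) * (A - ∑ i ∈ I, x i) = σl * A - S := by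
      have expand : ∀ I ∈ 𝒮, (∏ i ∈ I, κ i) * (A - ∑ i ∈ I, x i)
          = (∏ i ∈ I, κ i) * A - (∏ i ∈ I, κ i) * ∑ i ∈ I, x i := fun I _ => by ring
      rw [Finset.sum_congr rfl expand, Finset.sum_sub_distrib, ← Finset.sum_mul,
        ← hσldef, ← hSdef]
    rw [hL] at h
    rw [hRdef]
    exact h
  have hQ2 : R ≤ m * (σl * B - Z) := by
    have per : ∀ I ∈ 𝒮, (A - ∑ i ∈ I, x i)^2 ≤ m * (B - ∑ i ∈ I, (x i)^2) := by
      intro I hI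
      rw [h𝒮def, mem_powersetCard] at hI
      obtain ⟨hIsub, hIcard⟩ := hI
      have hA' : A - ∑ i ∈ I, x i = ∑ i ∈ univ \ I, x i := by
        have h := Finset.sum_sdiff (f := x) hIsub
        rw [hAdef]; linarith
      have hB' : B - ∑ i ∈ I, (x i)^2 = ∑ i ∈ univ \ I, (x i)^2 := by
        have h := Finset.sum_sdiff (f := fun i => (x i)^2) hIsub
        rw [hBdef]; linarith
      have hcards : ((univ \ I).card : ℝ) = m := by
        rw [Finset.card_sdiff_of_subset hIsub, hcard, hIcard, hmdef]
        push_cast [Nat.cast_sub hl2.le]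
        ring
      rw [hA', hB', ← hcards]
      exact sq_sum_le_card_mul_sum_sq
    have step : R ≤ ∑ I ∈ 𝒮, (∏ i ∈ I, κ i) * (m * (B - ∑ i ∈ I, (x i)^2)) := by
      rw [hRdef]
      exact Finset.sum_le_sum fun I hI =>
        mul_le_mul_of_nonneg_left (per I hI) (hkpos I hI)
    refine step.trans (le_of_eq ?_)
    have expand : ∀ I ∈ 𝒮, (∏ i ∈ I, κ i) * (m * (B - ∑ i ∈ I, (x i)^2))
        = m * ((∏ i ∈ I, κ i) * B) - m * ((∏ i ∈ I, κ i) * ∑ i ∈ I, (x i)^2) :=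
      fun I _ => by ring
    rw [Finset.sum_congr rfl expand, Finset.sum_sub_distrib, ← Finset.mul_sum,
      ← Finset.mul_sum, ← Finset.sum_mul, ← hσldef, ← hZdef]
    ring
  -- final assembly
  have hE : 0 ≤ m*δ*σl^2*B + (1-δ)*σl^2*A^2 + m*δ*σl*W - m*δ*σl*Z - (m*δ + δ - δ^2)*S^2 := by
    have h1 : 0 ≤ m*δ*(σl*W - S^2) :=
      mul_nonneg (mul_nonneg hm.le hδ.le) (by linarith)
    have h2 : 0 ≤ δ*σl*(m*(σl*B - Z) - R) :=
      mul_nonneg (mul_nonneg hδ.le hσlpos.le) (by linarith)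
    have h3 : 0 ≤ δ*(σl*R - (σl*A - S)^2) := mul_nonneg hδ.le (by linarith)
    have h4 : 0 ≤ (σl*A - δ*S)^2 := sq_nonneg _
    nlinarith [h1, h2, h3, h4]
  clear_value m x P A B 𝒮 σl S W Z R
  rw [hPn, hσl, hSn, hTn, hSl, hTl, ge_iff_le, ← sub_nonneg]
  have key : (-(P * (A ^ 2 - B)) + (1 - 1 / m + 1 / (m * δ)) * (P * A) ^ 2 / P)
      - ((1 + (1 - δ) / m) * P * S ^ 2 / σl ^ 2 - P / σl * (W - Z))
      = P * (m*δ*σl^2*B + (1-δ)*σl^2*A^2 + m*δ*σl*W - m*δ*σl*Z - (m*δ + δ - δ^2)*S^2)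
          / (σl^2 * (m*δ)) := by
    field_simp
    ring
  rw [key]
  apply div_nonneg (mul_nonneg hPpos.le hE)
  positivity
end

section
/- Let n ≥ 2, let κ = (κ_1, …, κ_n) ∈ ℝ^n have all entries positive, let 1 ≤ l < n be an integer and let 0 < ε < 1. Then for every vector v = (v_1, …, v_n) ∈ ℝ^n one has: (2−ε) · (Σ_p σ_{n-1}(κ|p) v_p)² / σ_n(κ) − Σ_{p≠q} σ_{n-2}(κ|pq) v_p v_q ≥ (1 + (1−ε)/((n−1)(2−ε))) · σ_n(κ) · (Σ_p σ_{l-1}(κ|p) v_p)² / σ_l(κ)² − (σ_n(κ)/σ_l(κ)) · Σ_{p≠q} σ_{l-2}(κ|pq) v_p v_q. -/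
open Finset

namespace esymmAux

variable {n : ℕ} {κ : Fin n → ℝ}

lemma esymm_neg {s : Finset (Fin n)} {k : ℤ} (hk : k < 0) : esymmSet s k κ = 0 := by
  simp [esymmSet, hk]

lemma esymm_coe {s : Finset (Fin n)} (k : ℕ) :
    esymmSet s (k : ℤ) κ = ∑ t ∈ s.powersetCard k, ∏ j ∈ t, κ j := by
  simp [esymmSet]

lemma esymm_nonneg (hκ : ∀ i, 0 < κ i) (s : Finset (Fin n)) (k : ℤ) :
    0 ≤ esymmSet s k κ := by
  unfold esymmSet
  split
  · exact le_rfl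
  · exact Finset.sum_nonneg fun t _ => Finset.prod_nonneg fun j _ => (hκ j).le

lemma esymm_pos (hκ : ∀ i, 0 < κ i) {s : Finset (Fin n)} {k : ℤ}
    (hk0 : 0 ≤ k) (hk : k ≤ s.card) : 0 < esymmSet s k κ := by
  unfold esymmSet
  rw [if_neg (by omega)]
  refine Finset.sum_pos (fun t _ => Finset.prod_pos fun j _ => hκ j) ?_
  rw [Finset.powersetCard_nonempty]
  omega

lemma esymm_zero_of_card_lt (hκ : ∀ i, 0 < κ i) {s : Finset (Fin n)} {k : ℤ}
    (hk : (s.card : ℤ) < k) : esymmSet s k κ = 0 := by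
  unfold esymmSet
  rw [if_neg (by omega)]
  rw [Finset.powersetCard_eq_empty.2 (by omega), Finset.sum_empty]

lemma esymm_insert {s : Finset (Fin n)} {x : Fin n} (hx : x ∉ s) (k : ℤ) :
    esymmSet (insert x s) k κ = esymmSet s k κ + κ x * esymmSet s (k - 1) κ := by
  rcases lt_or_ge k 0 with hk | hk
  · rw [esymm_neg hk, esymm_neg hk, esymm_neg (by omega), mul_zero, add_zero]
  rcases eq_or_lt_of_le hk with hk0 | hkpos
  · subst hk0
    rw [esymm_neg (by norm_num : (0:ℤ) - 1 < 0), mul_zero, add_zero]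
    simp [esymmSet]
  · obtain ⟨m, rfl⟩ : ∃ m : ℕ, k = (m : ℤ) + 1 := ⟨(k - 1).toNat, by omega⟩
    have h1 : ((m : ℤ) + 1) = ((m + 1 : ℕ) : ℤ) := by push_cast; ring
    have h2 : ((m + 1 : ℕ) : ℤ) - 1 = ((m : ℕ) : ℤ) := by push_cast; ring
    rw [h1, h2, esymm_coe, esymm_coe, esymm_coe,
      Finset.powersetCard_succ_insert hx, Finset.sum_union, Finset.sum_image]
    · congr 1
      rw [Finset.mul_sum]
      refine Finset.sum_congr rfl fun t ht => ?_
      rw [Finset.mem_powersetCard] at ht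
      rw [Finset.prod_insert (fun hmem => hx (ht.1 hmem))]
    · intro t ht u hu htu
      rw [Finset.mem_coe, Finset.mem_powersetCard] at ht hu
      have hxt : x ∉ t := fun hmem => hx (ht.1 hmem)
      have hxu : x ∉ u := fun hmem => hx (hu.1 hmem)
      rw [← Finset.erase_insert hxt, ← Finset.erase_insert hxu, htu]
    · rw [Finset.disjoint_left]
      intro t ht ht'
      rw [Finset.mem_powersetCard] at ht
      rw [Finset.mem_image] at ht'
      obtain ⟨u, hu, rfl⟩ := ht'
      rw [Finset.mem_powersetCard] at hu
      have : x ∈ insert x u := Finset.mem_insert_self x u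
      exact hx (ht.1 this)

section partB
variable {n : ℕ} {κ : Fin n → ℝ}

lemma swap_pairs (F : Fin n → Fin n → ℝ) :
    ∑ p : Fin n, ∑ q ∈ univ.erase p, F p q = ∑ q : Fin n, ∑ p ∈ univ.erase q, F p q :=
  Finset.sum_comm' (fun p q => by simp [Finset.mem_erase, ne_comm])

lemma sum_esymm_erase (s : Finset (Fin n)) (k : ℕ) :
    ∑ p ∈ s, esymmSet (s.erase p) (k : ℤ) κ = ((s.card : ℝ) - k) * esymmSet s (k : ℤ) κ := by
  simp_rw [esymm_coe]
  rw [Finset.sum_comm' (s' := fun t => s \ t) (t' := s.powersetCard k)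
    (fun p t => by
      simp only [Finset.mem_powersetCard, Finset.subset_erase, Finset.mem_sdiff]
      tauto)]
  rw [Finset.mul_sum]
  refine Finset.sum_congr rfl fun t ht => ?_
  rw [Finset.mem_powersetCard] at ht
  rw [Finset.sum_const, nsmul_eq_mul, Finset.card_sdiff_of_subset ht.1, ht.2,
    Nat.cast_sub (ht.2 ▸ Finset.card_le_card ht.1)]

lemma newton_chain (hκ : ∀ i, 0 < κ i) (s : Finset (Fin n)) : ∀ i j : ℤ, 0 ≤ j → j ≤ i →
    esymmSet s (i + 1) κ * esymmSet s (j - 1) κ ≤ esymmSet s i κ * esymmSet s j κ := by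
  classical
  induction s using Finset.induction_on with
  | empty =>
    intro i j hj hij
    have hR : 0 ≤ esymmSet (∅ : Finset (Fin n)) i κ * esymmSet ∅ j κ :=
      mul_nonneg (esymm_nonneg hκ _ _) (esymm_nonneg hκ _ _)
    rcases eq_or_lt_of_le hj with hj0 | hj1
    · obtain rfl : j = 0 := hj0.symm
      rw [esymm_neg (by norm_num : (0:ℤ) - 1 < 0), mul_zero]; exact hR
    · rw [esymm_zero_of_card_lt hκ (s := (∅ : Finset (Fin n)))
        (show (((∅ : Finset (Fin n)).card : ℤ)) < i + 1 by simp; omega), zero_mul]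
      exact hR
  | insert x s hx ih =>
    intro i j hj hij
    have hnn : ∀ k : ℤ, 0 ≤ esymmSet s k κ := fun k => esymm_nonneg hκ _ _
    have hc : 0 < κ x := hκ x
    rcases eq_or_lt_of_le hj with hj0 | hj1
    · obtain rfl : j = 0 := hj0.symm
      rw [esymm_neg (by norm_num : (0:ℤ) - 1 < 0), mul_zero]
      exact mul_nonneg (esymm_nonneg hκ _ _) (esymm_nonneg hκ _ _)
    rw [esymm_insert hx, esymm_insert hx, esymm_insert hx, esymm_insert hx,
      show i + 1 - 1 = i by ring, show j - 1 - 1 = j - 2 by ring]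
    have t0 : esymmSet s (i+1) κ * esymmSet s (j-1) κ ≤ esymmSet s i κ * esymmSet s j κ :=
      ih i j hj hij
    have t2 : esymmSet s i κ * esymmSet s (j-2) κ ≤ esymmSet s (i-1) κ * esymmSet s (j-1) κ := by
      have := ih (i-1) (j-1) (by omega) (by omega)
      have e1 : i - 1 + 1 = i := by ring
      have e2 : j - 1 - 1 = j - 2 := by ring
      rwa [e1, e2] at this
    have t1 : esymmSet s (i+1) κ * esymmSet s (j-2) κ ≤ esymmSet s (i-1) κ * esymmSet s j κ := by
      rcases eq_or_lt_of_le (show (1:ℤ) ≤ j by omega) with hj1' | hj2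
      · rw [show j - 2 = -1 by omega, esymm_neg (s := s) (k := (-1 : ℤ)) (by norm_num), mul_zero]
        exact mul_nonneg (hnn _) (hnn _)
      · have u1 : esymmSet s (i+1) κ * esymmSet s (j-2) κ ≤ esymmSet s i κ * esymmSet s (j-1) κ := by
          have := ih i (j-1) (by omega) (by omega)
          rwa [show j - 1 - 1 = j - 2 by ring] at this
        have u2 : esymmSet s i κ * esymmSet s (j-1) κ ≤ esymmSet s (i-1) κ * esymmSet s j κ := by
          rcases eq_or_lt_of_le hij with rfl | hlt
          · exact le_of_eq (by ring)
          · have := ih (i-1) j hj (by omega)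
            rwa [show i - 1 + 1 = i by ring] at this
        linarith
    have h1 := mul_le_mul_of_nonneg_left t1 hc.le
    have h2 := mul_le_mul_of_nonneg_left t2 (mul_nonneg hc.le hc.le)
    nlinarith [t0, h1, h2]

lemma core (L m : ℝ) (hL : 0 < L) (hm : 0 < m)
    (g : Fin n → ℝ) (h : Fin n → Fin n → ℝ) (w : Fin n → ℝ)
    (hg : ∀ p, 0 ≤ g p)
    (hsym : ∀ p q, h p q = h q p)
    (hub : ∀ p q, p ≠ q → L * h p q ≤ g p * g q)
    (hrow : ∀ p, ∑ q ∈ univ.erase p, h p q = (m - 1) * g p)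
    (hsum : ∑ p, g p = m * L) :
    (1 + 1/m) * (∑ p, g p * w p)^2 ≤
      2 * L * (∑ p, g p * w p^2) + L * ∑ p : Fin n, ∑ q ∈ univ.erase p, h p q * w p * w q := by
  set A := ∑ p, g p * w p with hA
  set Sg := ∑ p, g p * w p^2 with hSg
  -- Cauchy-Schwarz
  have hCS : A^2 ≤ (m * L) * Sg := by
    have := Finset.sum_mul_sq_le_sq_mul_sq univ
      (fun p => Real.sqrt (g p)) (fun p => Real.sqrt (g p) * w p)
    have e1 : ∑ p, Real.sqrt (g p) * (Real.sqrt (g p) * w p) = A := by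
      refine Finset.sum_congr rfl fun p _ => ?_
      rw [← mul_assoc, Real.mul_self_sqrt (hg p)]
    have e2 : ∑ p, Real.sqrt (g p) ^ 2 = m * L := by
      rw [← hsum]
      exact Finset.sum_congr rfl fun p _ => Real.sq_sqrt (hg p)
    have e3 : ∑ p, (Real.sqrt (g p) * w p) ^ 2 = Sg := by
      refine Finset.sum_congr rfl fun p _ => ?_
      rw [mul_pow, Real.sq_sqrt (hg p)]
    rw [e1, e2, e3] at this
    exact this
  -- partial row sums
  have hger : ∀ p, ∑ q ∈ univ.erase p, g q = m * L - g p := fun p =>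
    eq_sub_of_add_eq (by rw [Finset.sum_erase_add univ g (Finset.mem_univ p), hsum])
  have hgwer : ∀ p, ∑ q ∈ univ.erase p, g q * w q = A - g p * w p := fun p =>
    eq_sub_of_add_eq (by rw [Finset.sum_erase_add univ _ (Finset.mem_univ p)])
  -- lower bound for the off-diagonal sum
  have key : L * ∑ p : Fin n, ∑ q ∈ univ.erase p, h p q * w p * w q ≥
      (A^2 - ∑ p, (g p * w p)^2) - ∑ p, g p * (L - g p) * w p^2 := by
    have hterm : ∀ p q, p ≠ q →
        g p * g q * (w p * w q) - (g p * g q - L * h p q) * ((w p^2 + w q^2)/2)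
          ≤ L * (h p q * w p * w q) := by
      intro p q hpq
      nlinarith [mul_nonneg (sub_nonneg.2 (hub p q hpq)) (sq_nonneg (w p - w q))]
    have hsum1 : ∑ p : Fin n, ∑ q ∈ univ.erase p, g p * g q * (w p * w q)
        = A^2 - ∑ p, (g p * w p)^2 := by
      have : ∀ p : Fin n, ∑ q ∈ univ.erase p, g p * g q * (w p * w q)
          = g p * w p * A - (g p * w p)^2 := by
        intro p
        have : ∑ q ∈ univ.erase p, g p * g q * (w p * w q)
            = (g p * w p) * ∑ q ∈ univ.erase p, g q * w q := by
          rw [Finset.mul_sum]; exact Finset.sum_congr rfl fun q _ => by ring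
        rw [this, hgwer p]; ring
      rw [Finset.sum_congr rfl fun p _ => this p, Finset.sum_sub_distrib, ← Finset.sum_mul, ← hA]
      ring
    have hsum2 : ∑ p : Fin n, ∑ q ∈ univ.erase p,
        (g p * g q - L * h p q) * ((w p^2 + w q^2)/2) = ∑ p, g p * (L - g p) * w p^2 := by
      have split : ∀ p q : Fin n, (g p * g q - L * h p q) * ((w p^2 + w q^2)/2)
          = (g p * g q - L * h p q) * w p^2 / 2 + (g p * g q - L * h p q) * w q^2 / 2 := by
        intro p q; ring
      simp_rw [split, Finset.sum_add_distrib]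
      have part1 : ∑ p : Fin n, ∑ q ∈ univ.erase p, (g p * g q - L * h p q) * w p^2 / 2
          = ∑ p, g p * (m * L - g p - L * (m-1)) * w p^2 / 2 := by
        refine Finset.sum_congr rfl fun p _ => ?_
        have : ∑ q ∈ univ.erase p, (g p * g q - L * h p q) * w p^2 / 2
            = (g p * (∑ q ∈ univ.erase p, g q) - L * (∑ q ∈ univ.erase p, h p q)) * w p^2 / 2 := by
          rw [Finset.mul_sum, Finset.mul_sum, ← Finset.sum_sub_distrib, ← Finset.sum_div,
            ← Finset.sum_mul]
        rw [this, hger p, hrow p]; ring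
      have part2 : ∑ p : Fin n, ∑ q ∈ univ.erase p, (g p * g q - L * h p q) * w q^2 / 2
          = ∑ p, g p * (m * L - g p - L * (m-1)) * w p^2 / 2 := by
        rw [swap_pairs]
        refine Finset.sum_congr rfl fun q _ => ?_
        have e0 : ∀ p, (g p * g q - L * h p q) * w q^2 / 2
            = g p * (g q * w q^2 / 2) - h q p * (L * w q^2 / 2) := fun p => by
          rw [hsym q p]; ring
        simp_rw [e0]
        rw [Finset.sum_sub_distrib, ← Finset.sum_mul, ← Finset.sum_mul, hger q, hrow q]
        ring
      rw [part1, part2, ← Finset.sum_add_distrib]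
      refine Finset.sum_congr rfl fun p _ => by ring
    calc (A^2 - ∑ p, (g p * w p)^2) - ∑ p, g p * (L - g p) * w p^2
        = ∑ p : Fin n, ∑ q ∈ univ.erase p,
            (g p * g q * (w p * w q) - (g p * g q - L * h p q) * ((w p^2 + w q^2)/2)) := by
          simp_rw [Finset.sum_sub_distrib]
          rw [hsum1, hsum2]
      _ ≤ ∑ p : Fin n, ∑ q ∈ univ.erase p, L * (h p q * w p * w q) := by
          refine Finset.sum_le_sum fun p _ => Finset.sum_le_sum fun q hq => ?_
          exact hterm p q (by rw [Finset.mem_erase] at hq; exact fun h' => hq.1 (h'.symm))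
      _ = L * ∑ p : Fin n, ∑ q ∈ univ.erase p, h p q * w p * w q := by
          rw [Finset.mul_sum]
          exact Finset.sum_congr rfl fun p _ => (Finset.mul_sum _ _ _).symm
  -- diagonal comparison: ∑ (g p)^2 w^2 + ∑ g(L-g) w^2 = L * Sg
  have hdiag : (∑ p, (g p * w p)^2) + ∑ p, g p * (L - g p) * w p^2 = L * Sg := by
    rw [← Finset.sum_add_distrib, hSg, Finset.mul_sum]
    exact Finset.sum_congr rfl fun p _ => by ring
  have hLS : A^2 ≤ m * (L * Sg) := by rw [← mul_assoc]; exact hCS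
  have h1m : (1/m) * A^2 ≤ L * Sg := by
    rw [div_mul_eq_mul_div, div_le_iff₀ hm, mul_comm (L * Sg) m]
    linarith
  linarith [key, hdiag, h1m]

lemma esymm_top (s : Finset (Fin n)) : esymmSet s (s.card : ℤ) κ = ∏ j ∈ s, κ j := by
  rw [esymm_coe, Finset.powersetCard_self, Finset.sum_singleton]

lemma sum_erase_eq (b : Fin n → ℝ) (p : Fin n) :
    ∑ q ∈ univ.erase p, b q = (∑ r, b r) - b p :=
  eq_sub_of_add_eq (Finset.sum_erase_add univ b (Finset.mem_univ p))

lemma offdiag_sum (a b : Fin n → ℝ) :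
    ∑ p : Fin n, ∑ q ∈ univ.erase p, a p * b q
      = (∑ p, a p) * (∑ p, b p) - ∑ p, a p * b p := by
  have h1 : ∀ p : Fin n, ∑ q ∈ univ.erase p, a p * b q = a p * (∑ r, b r) - a p * b p := by
    intro p
    rw [← Finset.mul_sum, sum_erase_eq b p, mul_sub]
  rw [Finset.sum_congr rfl fun p _ => h1 p, Finset.sum_sub_distrib, ← Finset.sum_mul]

lemma scalar_ineq (ν m ε X A : ℝ) (hν : 2 ≤ ν) (hm1 : 1 ≤ m) (hmν : m ≤ ν - 1)
    (hε1 : 0 < ε) (hε2 : ε < 1) :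
    (1 + (1 - ε) / ((ν - 1) * (2 - ε))) * (X - A)^2
      ≤ (2 - ε) * X^2 - 2 * X * A + (1 + 1/m) * A^2 := by
  have h2ε : 0 < 2 - ε := by linarith
  have hν1 : (1:ℝ) ≤ ν - 1 := by linarith
  have hd0 : 0 < (ν - 1) * (2 - ε) := mul_pos (by linarith) h2ε
  set d := (ν - 1) * (2 - ε) with hd
  have hm0 : 0 < m := by linarith
  have hG' : 0 ≤ (1 - ε - (1 - ε)/d) * X^2 + 2 * ((1 - ε)/d) * (X * A) + (1/d) * A^2 := by
    have e1 : d * ((1 - ε - (1 - ε)/d) * X^2 + 2 * ((1 - ε)/d) * (X * A) + (1/d) * A^2)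
        = ((1 - ε) * X + A)^2 + (1 - ε) * (d - (2 - ε)) * X^2 := by
      field_simp
      ring
    have hd2 : 0 ≤ d - (2 - ε) := by nlinarith
    have e2 : 0 ≤ ((1 - ε) * X + A)^2 + (1 - ε) * (d - (2 - ε)) * X^2 :=
      add_nonneg (sq_nonneg _) (mul_nonneg (mul_nonneg (by linarith) hd2) (sq_nonneg X))
    nlinarith [e1, e2, hd0]
  have hsplit : (1 - ε)/d + 1/d = 1/(ν - 1) := by
    rw [hd]
    field_simp
    ring
  have hAm : (1/(ν - 1)) * A^2 ≤ (1/m) * A^2 :=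
    mul_le_mul_of_nonneg_right (by
      apply one_div_le_one_div_of_le hm0 hmν) (sq_nonneg A)
  have hAeq : ((1 - ε)/d + 1/d) * A^2 = (1/(ν - 1)) * A^2 := by rw [hsplit]
  nlinarith [hG', hAm, hAeq]

end partB

end esymmAux

open esymmAux in

set_option maxHeartbeats 2000000 in
/-- key inequality (taking `δ = 1/(2−ε)` in the concavity inequality). -/
theorem esymm_key_ineq (n : ℕ) (hn : 2 ≤ n)
    (κ : Fin n → ℝ) (hκ : ∀ i, 0 < κ i)
    (l : ℕ) (hl1 : 1 ≤ l) (hl2 : l < n) (ε : ℝ) (hε1 : 0 < ε) (hε2 : ε < 1)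
    (v : Fin n → ℝ) :
    (2 - ε) * (∑ p : Fin n, esymmSet (univ.erase p) ((n : ℤ) - 1) κ * v p) ^ 2 /
        esymmSet univ (n : ℤ) κ
      - ∑ p : Fin n, ∑ q ∈ univ.erase p,
          esymmSet ((univ.erase p).erase q) ((n : ℤ) - 2) κ * v p * v q
    ≥ (1 + (1 - ε) / (((n : ℝ) - 1) * (2 - ε))) * esymmSet univ (n : ℤ) κ *
          (∑ p : Fin n, esymmSet (univ.erase p) ((l : ℤ) - 1) κ * v p) ^ 2 /
            (esymmSet univ (l : ℤ) κ) ^ 2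
      - esymmSet univ (n : ℤ) κ / esymmSet univ (l : ℤ) κ *
          ∑ p : Fin n, ∑ q ∈ univ.erase p,
            esymmSet ((univ.erase p).erase q) ((l : ℤ) - 2) κ * v p * v q := by
  classical
  have hκ' : ∀ p : Fin n, κ p ≠ 0 := fun p => (hκ p).ne'
  obtain ⟨w, hv⟩ : ∃ w : Fin n → ℝ, ∀ p, v p = κ p * w p :=
    ⟨fun p => v p / κ p, fun p => (mul_div_cancel₀ (v p) (hκ' p)).symm⟩
  obtain ⟨g, hgdef⟩ : ∃ g : Fin n → ℝ, ∀ p, g p = esymmSet (univ.erase p) ((l : ℕ) : ℤ) κ :=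
    ⟨_, fun p => rfl⟩
  obtain ⟨hh, hhdef⟩ : ∃ hh : Fin n → Fin n → ℝ,
      ∀ p q, hh p q = esymmSet ((univ.erase p).erase q) ((l : ℕ) : ℤ) κ :=
    ⟨_, fun p q => rfl⟩
  set P := esymmSet univ (n : ℤ) κ with hPdef
  set L := esymmSet univ (l : ℤ) κ with hLdef
  -- cardinalities
  have hcard_univ : (univ : Finset (Fin n)).card = n := by simp
  have hcard_er : ∀ p : Fin n, (univ.erase p).card = n - 1 := fun p => by
    rw [Finset.card_erase_of_mem (Finset.mem_univ p), hcard_univ]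
  have hcard_er2 : ∀ p q : Fin n, q ≠ p → ((univ.erase p).erase q).card = n - 2 := by
    intro p q hqp
    rw [Finset.card_erase_of_mem (Finset.mem_erase.2 ⟨hqp, Finset.mem_univ q⟩), hcard_er p]; omega
  -- positivity
  have hP : 0 < P := by
    rw [hPdef]
    exact esymm_pos hκ (Int.natCast_nonneg n) (by rw [hcard_univ])
  have hL : 0 < L := by
    rw [hLdef]
    refine esymm_pos hκ (Int.natCast_nonneg l) ?_
    rw [hcard_univ]; exact_mod_cast hl2.le
  have hg0 : ∀ p, 0 ≤ g p := fun p => (hgdef p) ▸ esymm_nonneg hκ _ _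
  -- top-degree products
  have htopP : P = ∏ j, κ j := by
    rw [hPdef, show (n : ℤ) = (((univ : Finset (Fin n)).card : ℕ) : ℤ) by rw [hcard_univ],
      esymm_top]
  have htop1 : ∀ p : Fin n, esymmSet (univ.erase p) ((n : ℤ) - 1) κ = ∏ j ∈ univ.erase p, κ j := by
    intro p
    rw [show (n : ℤ) - 1 = (((univ.erase p).card : ℕ) : ℤ) by rw [hcard_er p]; omega, esymm_top]
  have htop2 : ∀ p q : Fin n, q ≠ p →
      esymmSet ((univ.erase p).erase q) ((n : ℤ) - 2) κ = ∏ j ∈ (univ.erase p).erase q, κ j := by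
    intro p q hqp
    rw [show (n : ℤ) - 2 = ((((univ.erase p).erase q).card : ℕ) : ℤ) by
      rw [hcard_er2 p q hqp]; omega, esymm_top]
  -- decompositions
  have dec1 : ∀ p : Fin n, L = g p + κ p * esymmSet (univ.erase p) ((l : ℤ) - 1) κ := by
    intro p
    have h0 := esymm_insert (κ := κ) (hx := Finset.notMem_erase p univ) ((l : ℕ) : ℤ)
    rw [Finset.insert_erase (Finset.mem_univ p)] at h0
    rw [hLdef, hgdef p]
    exact h0
  have dec2 : ∀ p q : Fin n, q ≠ p →
      g p = hh p q + κ q * esymmSet ((univ.erase p).erase q) ((l : ℤ) - 1) κ := by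
    intro p q hqp
    have h0 := esymm_insert (κ := κ)
      (hx := Finset.notMem_erase q (univ.erase p)) ((l : ℕ) : ℤ)
    rw [Finset.insert_erase (Finset.mem_erase.2 ⟨hqp, Finset.mem_univ q⟩)] at h0
    rw [hgdef p, hhdef p q]
    exact h0
  have dec3 : ∀ p q : Fin n, q ≠ p →
      esymmSet (univ.erase p) ((l : ℤ) - 1) κ
        = esymmSet ((univ.erase p).erase q) ((l : ℤ) - 1) κ
          + κ q * esymmSet ((univ.erase p).erase q) ((l : ℤ) - 2) κ := by
    intro p q hqp
    have h0 := esymm_insert (κ := κ)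
      (hx := Finset.notMem_erase q (univ.erase p)) ((l : ℤ) - 1)
    rwa [Finset.insert_erase (Finset.mem_erase.2 ⟨hqp, Finset.mem_univ q⟩),
      show (l : ℤ) - 1 - 1 = (l : ℤ) - 2 by ring] at h0
  have dec4 : ∀ p q : Fin n, q ≠ p →
      g q = hh p q + κ p * esymmSet ((univ.erase p).erase q) ((l : ℤ) - 1) κ := by
    intro p q hqp
    have h0 := esymm_insert (κ := κ)
      (hx := Finset.notMem_erase p (univ.erase q)) ((l : ℕ) : ℤ)
    rw [Finset.insert_erase (Finset.mem_erase.2 ⟨hqp.symm, Finset.mem_univ p⟩)] at h0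
    rw [Finset.erase_right_comm] at h0
    rw [hgdef q, hhdef p q]
    exact h0
  -- core hypotheses
  have hsym : ∀ p q : Fin n, hh p q = hh q p := by
    intro p q
    rw [hhdef p q, hhdef q p, Finset.erase_right_comm]
  have hub : ∀ p q : Fin n, p ≠ q → L * hh p q ≤ g p * g q := by
    intro p q hpq
    have hqp : q ≠ p := hpq.symm
    set F := esymmSet ((univ.erase p).erase q) ((l : ℤ) - 1) κ with hF
    set G := esymmSet ((univ.erase p).erase q) ((l : ℤ) - 2) κ with hG
    have hEG : hh p q * G ≤ F * F := by
      have h0 := newton_chain hκ ((univ.erase p).erase q) ((l : ℤ) - 1) ((l : ℤ) - 1)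
        (by omega) le_rfl
      rw [show (l : ℤ) - 1 + 1 = ((l : ℕ) : ℤ) by ring, show (l : ℤ) - 1 - 1 = (l : ℤ) - 2 by ring]
        at h0
      rw [hhdef p q]
      exact h0
    have e3 : L = hh p q + κ q * F + κ p * F + κ p * κ q * G := by
      linear_combination dec1 p + κ p * dec3 p q hqp + dec2 p q hqp
    have hid : g p * g q - L * hh p q = κ p * κ q * (F * F - hh p q * G) := by
      rw [dec2 p q hqp, dec4 p q hqp, e3]
      ring
    nlinarith [hid, mul_pos (hκ p) (hκ q), hEG]
  have hm0 : (0:ℝ) < (n : ℝ) - l := by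
    have : (l : ℝ) < n := by exact_mod_cast hl2
    linarith
  have hrow : ∀ p : Fin n, ∑ q ∈ univ.erase p, hh p q = (((n : ℝ) - l) - 1) * g p := by
    intro p
    have h0 := sum_esymm_erase (κ := κ) (univ.erase p) l
    rw [hcard_er p] at h0
    rw [Finset.sum_congr rfl fun q _ => hhdef p q, hgdef p, h0]
    congr 1
    rw [Nat.cast_sub (by omega : 1 ≤ n)]
    ring
  have hsum : ∑ p, g p = ((n : ℝ) - l) * L := by
    have h0 := sum_esymm_erase (κ := κ) univ l
    rw [hcard_univ] at h0
    rw [Finset.sum_congr rfl fun p _ => hgdef p, hLdef]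
    exact h0
  -- the core inequality
  have hcore := core L ((n : ℝ) - l) hL hm0 g hh w hg0 hsym hub hrow hsum
  -- named sums
  set W := ∑ p, w p with hW
  set SW := ∑ p, w p ^ 2 with hSW
  set Ag := ∑ p, g p * w p with hAg
  set Sgw := ∑ p, g p * w p ^ 2 with hSgw
  set Hww := ∑ p : Fin n, ∑ q ∈ univ.erase p, hh p q * w p * w q with hHww
  -- sum computations
  have hS1 : ∑ p, esymmSet (univ.erase p) ((n : ℤ) - 1) κ * v p = P * W := by
    rw [hW, Finset.mul_sum]
    refine Finset.sum_congr rfl fun p _ => ?_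
    rw [htop1 p, hv p, htopP, ← Finset.prod_erase_mul univ κ (Finset.mem_univ p)]
    ring
  have hS2 : ∑ p : Fin n, ∑ q ∈ univ.erase p,
      esymmSet ((univ.erase p).erase q) ((n : ℤ) - 2) κ * v p * v q = P * (W^2 - SW) := by
    have hterm : ∀ p q : Fin n, q ≠ p →
        esymmSet ((univ.erase p).erase q) ((n : ℤ) - 2) κ * v p * v q
          = (P * w p) * w q := by
      intro p q hqp
      have e1 : (∏ j ∈ (univ.erase p).erase q, κ j) * κ q = ∏ j ∈ univ.erase p, κ j :=
        Finset.prod_erase_mul _ _ (Finset.mem_erase.2 ⟨hqp, Finset.mem_univ q⟩)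
      have e2 : (∏ j ∈ univ.erase p, κ j) * κ p = ∏ j, κ j :=
        Finset.prod_erase_mul _ _ (Finset.mem_univ p)
      rw [htop2 p q hqp, hv p, hv q, htopP, ← e2, ← e1]
      ring
    rw [Finset.sum_congr rfl fun p _ => Finset.sum_congr rfl fun q hq =>
      hterm p q (Finset.mem_erase.1 hq).1]
    rw [offdiag_sum (fun p => P * w p) w, ← Finset.mul_sum, ← hW]
    have e4 : ∑ p, P * w p * w p = P * SW := by
      rw [hSW, Finset.mul_sum]
      exact Finset.sum_congr rfl fun p _ => by ring
    rw [e4]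
    ring
  have hS3 : ∑ p, esymmSet (univ.erase p) ((l : ℤ) - 1) κ * v p = L * W - Ag := by
    have hterm : ∀ p : Fin n,
        esymmSet (univ.erase p) ((l : ℤ) - 1) κ * v p = L * w p - g p * w p := by
      intro p
      rw [hv p]
      linear_combination (-(w p)) * (dec1 p)
    rw [Finset.sum_congr rfl fun p _ => hterm p, Finset.sum_sub_distrib, ← Finset.mul_sum,
      ← hW, ← hAg]
  have hS4 : ∑ p : Fin n, ∑ q ∈ univ.erase p,
      esymmSet ((univ.erase p).erase q) ((l : ℤ) - 2) κ * v p * v q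
        = L * (W^2 - SW) - 2 * (Ag * W - Sgw) + Hww := by
    have hterm : ∀ p q : Fin n, q ≠ p →
        esymmSet ((univ.erase p).erase q) ((l : ℤ) - 2) κ * v p * v q
          = ((L - g p) * w p) * w q - w p * (g q * w q) + hh p q * w p * w q := by
      intro p q hqp
      have e3 : κ p * κ q * esymmSet ((univ.erase p).erase q) ((l : ℤ) - 2) κ
          = L - g p - g q + hh p q := by
        linear_combination (-1 : ℝ) * dec1 p - κ p * dec3 p q hqp + dec4 p q hqp
      rw [hv p, hv q]
      linear_combination (w p * w q) * e3
    rw [Finset.sum_congr rfl fun p _ => Finset.sum_congr rfl fun q hq =>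
      hterm p q (Finset.mem_erase.1 hq).1]
    have hsplit : ∀ p : Fin n, ∑ q ∈ univ.erase p,
        (((L - g p) * w p) * w q - w p * (g q * w q) + hh p q * w p * w q)
        = (∑ q ∈ univ.erase p, ((L - g p) * w p) * w q)
          - (∑ q ∈ univ.erase p, w p * (g q * w q))
          + ∑ q ∈ univ.erase p, hh p q * w p * w q := by
      intro p
      rw [Finset.sum_add_distrib, Finset.sum_sub_distrib]
    rw [Finset.sum_congr rfl fun p _ => hsplit p, Finset.sum_add_distrib,
      Finset.sum_sub_distrib, ← hHww]
    have e1 : ∑ p : Fin n, ∑ q ∈ univ.erase p, ((L - g p) * w p) * w q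
        = (L * W - Ag) * W - (L * SW - Sgw) := by
      rw [offdiag_sum (fun p => (L - g p) * w p) w, ← hW]
      have f1 : ∑ p, (L - g p) * w p = L * W - Ag := by
        rw [hW, hAg, Finset.sum_congr rfl fun p (_ : p ∈ univ) =>
          (show (L - g p) * w p = L * w p - g p * w p by ring),
          Finset.sum_sub_distrib, ← Finset.mul_sum]
      have f2 : ∑ p, (L - g p) * w p * w p = L * SW - Sgw := by
        rw [hSW, hSgw, Finset.sum_congr rfl fun p (_ : p ∈ univ) =>
          (show (L - g p) * w p * w p = L * w p ^ 2 - g p * w p ^ 2 by ring),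
          Finset.sum_sub_distrib, ← Finset.mul_sum]
      rw [f1, f2]
    have e2 : ∑ p : Fin n, ∑ q ∈ univ.erase p, w p * (g q * w q)
        = W * Ag - Sgw := by
      rw [offdiag_sum w (fun q => g q * w q), ← hW, ← hAg]
      have f3 : ∑ p, w p * (g p * w p) = Sgw := by
        rw [hSgw]
        exact Finset.sum_congr rfl fun p _ => by ring
      rw [f3]
    rw [e1, e2]
    ring
  -- rewrite the goal
  rw [hS1, hS2, hS3, hS4, ge_iff_le]
  -- scalar part
  have hscalar := scalar_ineq (n : ℝ) ((n : ℝ) - l) ε (L * W) Ag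
    (by exact_mod_cast hn) (by
      have h1 : (l : ℝ) + 1 ≤ (n : ℝ) := by exact_mod_cast hl2
      linarith) (by
      have h1 : (1 : ℝ) ≤ (l : ℝ) := by exact_mod_cast hl1
      linarith [h1]) hε1 hε2
  have hcomb : (1 + (1 - ε) / (((n : ℝ) - 1) * (2 - ε))) * (L * W - Ag)^2
      ≤ (2 - ε) * (L * W)^2 - 2 * (L * W) * Ag
        + (2 * L * Sgw + L * Hww) := by
    nlinarith [hscalar, hcore]
  have hfact : (1 + (1 - ε) / (((n : ℝ) - 1) * (2 - ε))) * P * (L * W - Ag)^2 / L^2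
      - P / L * (L * (W^2 - SW) - 2 * (Ag * W - Sgw) + Hww)
      = (P / L^2) * ((1 + (1 - ε) / (((n : ℝ) - 1) * (2 - ε))) * (L * W - Ag)^2
          - L * (L * (W^2 - SW) - 2 * (Ag * W - Sgw) + Hww)) := by
    field_simp
  have hfact2 : (2 - ε) * (P * W)^2 / P - P * (W^2 - SW)
      = (P / L^2) * ((2 - ε) * (L * W)^2 - L^2 * (W^2 - SW)) := by
    field_simp
  rw [hfact, hfact2]
  apply mul_le_mul_of_nonneg_left _ (le_of_lt (div_pos hP (by positivity)))
  nlinarith [hcomb]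
end

section
/- Let n ≥ 2, let κ = (κ_1, …, κ_n) ∈ ℝ^n have all entries positive with κ_1 = max_{1≤j≤n} κ_j, and let u = (u_{j,i}) be an arbitrary real n×n array. If i ≠ 1 is an index with √3 · κ_i ≤ κ_1, then B_i + C_i + D_i − E_i ≥ 0. -/
open Finset

/-- `‖W‖² = Σ_j κ_j²`. -/
noncomputable def Wsq {n : ℕ} (κ : Fin n → ℝ) : ℝ := ∑ j, (κ j) ^ 2

/-- The Gauss curvature `K = σ_n(κ) = κ_1 ⋯ κ_n`. -/
noncomputable def Kcurv {n : ℕ} (κ : Fin n → ℝ) : ℝ := ∏ j, κ j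

/-- `K^{pp} = σ_{n-1}(κ|p) = ∏_{j≠p} κ_j`. -/
noncomputable def Kp {n : ℕ} (κ : Fin n → ℝ) (p : Fin n) : ℝ :=
  ∏ j ∈ univ.erase p, κ j

/-- `K^{pp,qq} = σ_{n-2}(κ|pq) = ∏_{j≠p,q} κ_j` for `p ≠ q`, and `K^{pp,pp} = 0`. -/
noncomputable def Kpq {n : ℕ} (κ : Fin n → ℝ) (p q : Fin n) : ℝ :=
  if p = q then 0 else ∏ j ∈ (univ.erase p).erase q, κ j

/-- `K_{;i} = Σ_p K^{pp} u_{p,i}`. -/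
noncomputable def Kder {n : ℕ} (κ : Fin n → ℝ) (u : Fin n → Fin n → ℝ) (i : Fin n) : ℝ :=
  ∑ p, Kp κ p * u p i

/-- `A_i = ((2−ε)κ_i/(‖W‖² K)) K_{;i}² − (κ_i/‖W‖²) Σ_{p,q} K^{pp,qq} u_{p,i} u_{q,i}`. -/
noncomputable def termA {n : ℕ} (ε : ℝ) (κ : Fin n → ℝ) (u : Fin n → Fin n → ℝ)
    (i : Fin n) : ℝ :=
  (2 - ε) * κ i / (Wsq κ * Kcurv κ) * (Kder κ u i) ^ 2
    - κ i / Wsq κ * ∑ p, ∑ q, Kpq κ p q * u p i * u q i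

/-- `B_i = (2/‖W‖²) Σ_j κ_j K^{jj,ii} u_{j,i}²`. -/
noncomputable def termB {n : ℕ} (κ : Fin n → ℝ) (u : Fin n → Fin n → ℝ) (i : Fin n) : ℝ :=
  2 / Wsq κ * ∑ j, κ j * Kpq κ j i * (u j i) ^ 2

/-- `C_i = (2/‖W‖²) Σ_{j≠i} K^{jj} u_{j,i}²`. -/
noncomputable def termC {n : ℕ} (κ : Fin n → ℝ) (u : Fin n → Fin n → ℝ) (i : Fin n) : ℝ :=
  2 / Wsq κ * ∑ j ∈ univ.erase i, Kp κ j * (u j i) ^ 2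

/-- `D_i = (K^{ii}/‖W‖²) Σ_j u_{j,i}²`. -/
noncomputable def termD {n : ℕ} (κ : Fin n → ℝ) (u : Fin n → Fin n → ℝ) (i : Fin n) : ℝ :=
  Kp κ i / Wsq κ * ∑ j, (u j i) ^ 2

/-- `E_i = (2K^{ii}/‖W‖⁴) (Σ_j κ_j u_{j,i})²`. -/
noncomputable def termE {n : ℕ} (κ : Fin n → ℝ) (u : Fin n → Fin n → ℝ) (i : Fin n) : ℝ :=
  2 * Kp κ i / (Wsq κ) ^ 2 * (∑ j, κ j * u j i) ^ 2

/-- Lemma about balancing curvature derivative terms: if `κ_1` is the largest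
principal curvature and `√3 κ_i ≤ κ_1` for some index `i ≠ 1`, then
`B_i + C_i + D_i − E_i ≥ 0`. -/
theorem termBCDE_nonneg_of_small (n : ℕ) (hn : 2 ≤ n)
    (κ : Fin n → ℝ) (hκ : ∀ i, 0 < κ i)
    (hmax : ∀ j, κ j ≤ κ ⟨0, by omega⟩)
    (u : Fin n → Fin n → ℝ) (i : Fin n) (hi : i ≠ ⟨0, by omega⟩)
    (h3 : Real.sqrt 3 * κ i ≤ κ ⟨0, by omega⟩) :
    0 ≤ termB κ u i + termC κ u i + termD κ u i - termE κ u i := by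
  have i0 : Fin n := ⟨0, by omega⟩
  have hW : 0 < Wsq κ :=
    Finset.sum_pos (fun j _ => pow_pos (hκ j) 2) ⟨⟨0, by omega⟩, mem_univ _⟩
  have hK : 0 < Kp κ i := Finset.prod_pos (fun j _ => hκ j)
  set a : Fin n → ℝ := fun j => if j = i then 1 else 3 + 2 * κ i / κ j with ha
  have hapos : ∀ j, 0 < a j := by
    intro j
    have h1 := hκ i
    have h2 := hκ j
    by_cases h : j = i
    · norm_num [ha, h]
    · simp only [ha, if_neg h]
      positivity
  set T : ℝ := ∑ j, a j * (u j i) ^ 2 with hT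
  have hTnn : 0 ≤ T :=
    Finset.sum_nonneg fun j _ => mul_nonneg (hapos j).le (sq_nonneg _)
  -- key product identities
  have hKpq : ∀ j, j ≠ i → κ j * Kpq κ j i = Kp κ i := by
    intro j hj
    rw [Kpq, if_neg hj, Finset.erase_right_comm, Kp]
    exact Finset.mul_prod_erase _ _ (mem_erase.mpr ⟨hj, mem_univ j⟩)
  have hKpj : ∀ j, j ≠ i → Kp κ j = κ i * Kpq κ j i := by
    intro j hj
    rw [Kpq, if_neg hj, Kp]
    exact (Finset.mul_prod_erase _ _
      (mem_erase.mpr ⟨fun h => hj h.symm, mem_univ i⟩)).symm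
  have hKpq' : ∀ j, j ≠ i → Kpq κ j i = Kp κ i / κ j := by
    intro j hj
    rw [← hKpq j hj, mul_comm, mul_div_assoc, div_self (hκ j).ne', mul_one]
  -- B + C + D = K/W * T
  have hBCD : termB κ u i + termC κ u i + termD κ u i = Kp κ i / Wsq κ * T := by
    have hB : ∑ j, κ j * Kpq κ j i * (u j i) ^ 2
        = ∑ j ∈ univ.erase i, Kp κ i * (u j i) ^ 2 := by
      rw [← Finset.sum_erase_add _ _ (mem_univ i)]
      rw [Kpq, if_pos rfl]
      rw [mul_zero, zero_mul, add_zero]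
      exact Finset.sum_congr rfl fun j hj => by
        rw [hKpq j (mem_erase.mp hj).1]
    have hC : ∑ j ∈ univ.erase i, Kp κ j * (u j i) ^ 2
        = ∑ j ∈ univ.erase i, (κ i / κ j) * Kp κ i * (u j i) ^ 2 := by
      refine Finset.sum_congr rfl fun j hj => ?_
      have hj' := (mem_erase.mp hj).1
      rw [hKpj j hj', hKpq' j hj']
      field_simp
    have hTsplit : T = (u i i) ^ 2
        + ∑ j ∈ univ.erase i, (3 + 2 * κ i / κ j) * (u j i) ^ 2 := by
      rw [hT, ← Finset.sum_erase_add _ _ (mem_univ i)]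
      have : a i = 1 := by simp [ha]
      rw [this, one_mul, add_comm]
      congr 1
      exact Finset.sum_congr rfl fun j hj => by
        rw [ha]; simp only [if_neg (mem_erase.mp hj).1]
    have hD : ∑ j, (u j i) ^ 2
        = (u i i) ^ 2 + ∑ j ∈ univ.erase i, (u j i) ^ 2 := by
      rw [← Finset.sum_erase_add _ _ (mem_univ i), add_comm]
    rw [termB, termC, termD, hB, hC, hD, hTsplit]
    have hsum : ∑ j ∈ univ.erase i, 2 / Wsq κ * (Kp κ i * u j i ^ 2)
        + ∑ j ∈ univ.erase i, 2 / Wsq κ * (κ i / κ j * Kp κ i * u j i ^ 2)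
        + ∑ j ∈ univ.erase i, Kp κ i / Wsq κ * u j i ^ 2
        = ∑ j ∈ univ.erase i, Kp κ i / Wsq κ * ((3 + 2 * κ i / κ j) * u j i ^ 2) := by
      rw [← Finset.sum_add_distrib, ← Finset.sum_add_distrib]
      refine Finset.sum_congr rfl fun j hj => ?_
      ring
    simp only [Finset.mul_sum, mul_add]
    linarith [hsum]
  -- Cauchy-Schwarz
  set S : ℝ := ∑ j, κ j * u j i with hS
  have hCS : S ^ 2 ≤ (∑ j, (κ j) ^ 2 / a j) * T := by
    have h := Finset.sum_mul_sq_le_sq_mul_sq univ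
      (fun j => κ j / Real.sqrt (a j)) (fun j => Real.sqrt (a j) * u j i)
    have h1 : ∀ j : Fin n, κ j / Real.sqrt (a j) * (Real.sqrt (a j) * u j i)
        = κ j * u j i := by
      intro j
      have : Real.sqrt (a j) ≠ 0 := Real.sqrt_ne_zero'.mpr (hapos j)
      field_simp
    have h2 : ∀ j : Fin n, (κ j / Real.sqrt (a j)) ^ 2 = (κ j) ^ 2 / a j := by
      intro j
      rw [div_pow, Real.sq_sqrt (hapos j).le]
    have h3 : ∀ j : Fin n, (Real.sqrt (a j) * u j i) ^ 2 = a j * (u j i) ^ 2 := by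
      intro j
      rw [mul_pow, Real.sq_sqrt (hapos j).le]
    simp only [h1, h2, h3] at h
    exact h
  -- the weight sum is at most W/2
  have hP : (∑ j, (κ j) ^ 2 / a j) ≤ Wsq κ / 2 := by
    have hstep : (∑ j, (κ j) ^ 2 / a j)
        ≤ (κ i) ^ 2 + ∑ j ∈ univ.erase i, (κ j) ^ 2 / 3 := by
      rw [← Finset.sum_erase_add _ (fun j => (κ j) ^ 2 / a j) (mem_univ i)]
      have hai : a i = 1 := by simp [ha]
      rw [hai, div_one, add_comm]
      gcongr (κ i) ^ 2 + ?_
      refine Finset.sum_le_sum fun j hj => ?_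
      have hj' := (mem_erase.mp hj).1
      have haj : a j = 3 + 2 * κ i / κ j := by rw [ha]; simp [hj']
      rw [haj]
      apply div_le_div_of_nonneg_left (sq_nonneg _) (by norm_num)
      have : 0 ≤ 2 * κ i / κ j :=
        div_nonneg (mul_nonneg (by norm_num) (hκ i).le) (hκ j).le
      linarith
    have hWsplit : ∑ j ∈ univ.erase i, (κ j) ^ 2 = Wsq κ - (κ i) ^ 2 := by
      rw [Wsq, ← Finset.sum_erase_add _ _ (mem_univ i)]
      ring
    have h4W : 4 * (κ i) ^ 2 ≤ Wsq κ := by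
      have h3k : 3 * (κ i) ^ 2 ≤ (κ ⟨0, by omega⟩) ^ 2 := by
        have := h3
        have hnn : 0 ≤ Real.sqrt 3 * κ i :=
          mul_nonneg (Real.sqrt_nonneg 3) (hκ i).le
        calc 3 * (κ i) ^ 2 = (Real.sqrt 3 * κ i) ^ 2 := by
              rw [mul_pow, Real.sq_sqrt (by norm_num : (0:ℝ) ≤ 3)]
          _ ≤ (κ ⟨0, by omega⟩) ^ 2 := pow_le_pow_left₀ hnn this 2
      have hsub : (κ ⟨0, by omega⟩) ^ 2 + (κ i) ^ 2 ≤ Wsq κ := by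
        rw [Wsq]
        have : ({⟨0, by omega⟩, i} : Finset (Fin n)) ⊆ univ := Finset.subset_univ _
        calc (κ ⟨0, by omega⟩) ^ 2 + (κ i) ^ 2
            = ∑ j ∈ ({⟨0, by omega⟩, i} : Finset (Fin n)), (κ j) ^ 2 := by
              rw [Finset.sum_pair (fun h => hi h.symm)]
          _ ≤ ∑ j, (κ j) ^ 2 :=
              Finset.sum_le_sum_of_subset_of_nonneg this fun j _ _ => sq_nonneg _
      linarith
    have hdiv : ∑ j ∈ univ.erase i, (κ j) ^ 2 / 3 = (Wsq κ - (κ i) ^ 2) / 3 := by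
      rw [← Finset.sum_div, hWsplit]
    linarith
  -- conclude
  have hE : termE κ u i ≤ Kp κ i / Wsq κ * T := by
    rw [termE, ← hS]
    have hS2 : S ^ 2 ≤ Wsq κ / 2 * T := by
      calc S ^ 2 ≤ (∑ j, (κ j) ^ 2 / a j) * T := hCS
        _ ≤ Wsq κ / 2 * T := mul_le_mul_of_nonneg_right hP hTnn
    calc 2 * Kp κ i / (Wsq κ) ^ 2 * S ^ 2
        ≤ 2 * Kp κ i / (Wsq κ) ^ 2 * (Wsq κ / 2 * T) := by
          exact mul_le_mul_of_nonneg_left hS2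
            (div_nonneg (by linarith) (sq_nonneg _))
      _ = Kp κ i / Wsq κ * T := by field_simp
  rw [hBCD] at *
  linarith
end

section
/- Let n ≥ 2, let κ = (κ_1, …, κ_n) ∈ ℝ^n have all entries positive, and let u = (u_{j,i}) be an arbitrary real n×n array. Then for every index i one has ‖W‖⁴ · (B_i + C_i + D_i − E_i) ≥ ‖W‖² · Σ_{j≠i} σ_{n-1}(κ|j) u_{j,i}² − κ_i² · σ_{n-1}(κ|i) · u_{i,i}². -/
open Finset

/-- for every index `i`,
`‖W‖⁴ (B_i + C_i + D_i − E_i) ≥ ‖W‖² Σ_{j≠i} σ_{n-1}(κ|j) u_{j,i}² − κ_i² σ_{n-1}(κ|i) u_{i,i}²`. -/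
theorem Wsq_sq_mul_termBCDE_ge (n : ℕ) (hn : 2 ≤ n)
    (κ : Fin n → ℝ) (hκ : ∀ i, 0 < κ i)
    (u : Fin n → Fin n → ℝ) (i : Fin n) :
    (Wsq κ) ^ 2 * (termB κ u i + termC κ u i + termD κ u i - termE κ u i)
      ≥ Wsq κ * (∑ j ∈ univ.erase i, Kp κ j * (u j i) ^ 2)
        - (κ i) ^ 2 * Kp κ i * (u i i) ^ 2 := by
  classical
  have hi : i ∈ (univ : Finset (Fin n)) := mem_univ i
  set s := (univ : Finset (Fin n)).erase i with hs
  set W := Wsq κ with hWdef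
  set K := Kp κ i with hKdef
  set T := ∑ j ∈ s, (u j i) ^ 2 with hT
  set S := ∑ j ∈ s, κ j * u j i with hS
  set M := ∑ j ∈ s, (κ j) ^ 2 with hM
  set P := ∑ j ∈ s, Kp κ j * (u j i) ^ 2 with hP
  have hK0 : 0 < K := Finset.prod_pos (fun j _ => hκ j)
  have hW0 : 0 < W := Finset.sum_pos (fun j _ => pow_pos (hκ j) 2) ⟨i, hi⟩
  have hWM : W = M + (κ i) ^ 2 := by
    rw [hWdef, Wsq, ← Finset.sum_erase_add _ _ hi]
  have hBsum : ∑ j, κ j * Kpq κ j i * (u j i) ^ 2 = K * T := by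
    rw [← Finset.sum_erase_add _ _ hi]
    have h0 : κ i * Kpq κ i i * (u i i) ^ 2 = 0 := by simp [Kpq]
    rw [h0, add_zero, hT, Finset.mul_sum]
    refine Finset.sum_congr rfl fun j hj => ?_
    have hji : j ≠ i := Finset.ne_of_mem_erase hj
    have hkey : κ j * Kpq κ j i = K := by
      rw [Kpq, if_neg hji, hKdef, Kp, Finset.erase_right_comm]
      exact Finset.mul_prod_erase _ _ (Finset.mem_erase.2 ⟨hji, mem_univ j⟩)
    rw [hkey]
  have hDsum : ∑ j, (u j i) ^ 2 = T + (u i i) ^ 2 :=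
    (Finset.sum_erase_add _ _ hi).symm
  have hEsum : ∑ j, κ j * u j i = S + κ i * u i i :=
    (Finset.sum_erase_add _ _ hi).symm
  have hKpj : ∀ j ∈ s, Kp κ j * κ j = K * κ i := by
    intro j hj
    rw [hKdef, Kp, Kp, Finset.prod_erase_mul _ _ (mem_univ j),
      Finset.prod_erase_mul _ _ hi]
  have hWj : ∀ j ∈ s, (κ i) ^ 2 + (κ j) ^ 2 ≤ W := by
    intro j hj
    have : (κ j) ^ 2 ≤ M := Finset.single_le_sum (fun l _ => sq_nonneg (κ l)) hj
    rw [hWM]; linarith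
  have hP3 : 0 ≤ (W - 2 * (κ i) ^ 2) * K * T + W * P := by
    have hsplit : (W - 2 * (κ i) ^ 2) * K * T + W * P
        = ∑ j ∈ s, ((W - 2 * (κ i) ^ 2) * K * (u j i) ^ 2 + W * (Kp κ j * (u j i) ^ 2)) := by
      rw [Finset.sum_add_distrib, ← Finset.mul_sum, ← Finset.mul_sum, hT, hP]
    rw [hsplit]
    refine Finset.sum_nonneg fun j hj => ?_
    have hA : 0 ≤ (W - 2 * (κ i) ^ 2) * κ j + W * κ i := by
      have h1 := hWj j hj
      nlinarith [mul_nonneg (sub_nonneg.2 h1) (hκ j).le,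
        mul_nonneg (sub_nonneg.2 h1) (hκ i).le,
        mul_nonneg (hκ i).le (sq_nonneg (κ i - κ j)),
        mul_pos (mul_pos (hκ i) (hκ i)) (hκ j), pow_pos (hκ j) 3]
    have hcoef : 0 ≤ (W - 2 * (κ i) ^ 2) * K + W * Kp κ j := by
      have h2 : ((W - 2 * (κ i) ^ 2) * K + W * Kp κ j) * κ j
          = K * ((W - 2 * (κ i) ^ 2) * κ j + W * κ i) := by
        linear_combination W * hKpj j hj
      have h3 : 0 * κ j ≤ ((W - 2 * (κ i) ^ 2) * K + W * Kp κ j) * κ j := by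
        rw [zero_mul, h2]; exact mul_nonneg hK0.le hA
      exact le_of_mul_le_mul_right h3 (hκ j)
    nlinarith [mul_nonneg hcoef (sq_nonneg (u j i))]
  have hP2 : 0 ≤ 4 * (κ i) ^ 2 * T - 4 * κ i * u i i * S + M * (u i i) ^ 2 := by
    have h : ∑ j ∈ s, (2 * κ i * u j i - κ j * u i i) ^ 2
        = 4 * (κ i) ^ 2 * T - 4 * κ i * u i i * S + M * (u i i) ^ 2 := by
      rw [hT, hS, hM, Finset.mul_sum, Finset.mul_sum, Finset.sum_mul,
        ← Finset.sum_sub_distrib, ← Finset.sum_add_distrib]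
      exact Finset.sum_congr rfl fun j _ => by ring
    rw [← h]
    exact Finset.sum_nonneg fun j _ => sq_nonneg _
  have hCS : S ^ 2 ≤ M * T := by
    have := Finset.sum_mul_sq_le_sq_mul_sq s κ (fun j => u j i)
    simpa [hS, hM, hT] using this
  simp only [termB, termC, termD, termE]
  rw [← hWdef, ← hKdef, hBsum, hDsum, hEsum, ← hs, ← hP]
  rw [ge_iff_le, ← sub_nonneg]
  have key : W ^ 2 * (2 / W * (K * T) + 2 / W * P + K / W * (T + (u i i) ^ 2)
        - 2 * K / W ^ 2 * (S + κ i * u i i) ^ 2) - (W * P - (κ i) ^ 2 * K * (u i i) ^ 2)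
      = ((W - 2 * (κ i) ^ 2) * K * T + W * P)
        + K * (4 * (κ i) ^ 2 * T - 4 * κ i * u i i * S + M * (u i i) ^ 2)
        + 2 * K * (M * T - S ^ 2) := by
    field_simp
    rw [hWM]; ring
  have h2 : 0 ≤ K * (4 * (κ i) ^ 2 * T - 4 * κ i * u i i * S + M * (u i i) ^ 2) :=
    mul_nonneg hK0.le hP2
  have h3 : 0 ≤ 2 * K * (M * T - S ^ 2) := by
    have := sub_nonneg.2 hCS
    positivity
  linarith [key, hP3, h2, h3]
end
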